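/- Let 0 < α < 1 and a < b. For every t with a ≤ t < b, the left Riemann–Liouville fractional integral of order α based at a of the function s ↦ (b−s)^{α−1} satisfies (I^α_{a+} (b−·)^{α−1})(t) = ((b−t)^{2α−1}/Γ(α)) · ∫_1^{(b−a)/(b−t)} (w−1)^{α−1} w^{α−1} dw. -/

import Mathlib

open MeasureTheory intervalIntegral Real

/-- Left Riemann–Liouville fractional integral of order `α` based at `a`:
`(I^α_{a+} f)(t) = (1/Γ(α)) ∫_a^t f(s) (t−s)^{α−1} ds`. -/
noncomputable def RLintegralLeft (α a : ℝ) (f : ℝ → ℝ) (t : ℝ) : ℝ :=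
  (1 / Real.Gamma α) * ∫ s in a..t, f s * (t - s) ^ (α - 1)

theorem stmt0 (α a b : ℝ) (hα : 0 < α ∧ α < 1) (hab : a < b) :
    ∀ t : ℝ, a ≤ t → t < b →
      RLintegralLeft α a (fun s => (b - s) ^ (α - 1)) t =
        ((b - t) ^ (2 * α - 1) / Real.Gamma α) *
          ∫ w in (1:ℝ)..((b - a) / (b - t)), (w - 1) ^ (α - 1) * w ^ (α - 1) := by
  obtain ⟨hα0, hα1⟩ := hα
  intro t hat htb
  set c : ℝ := b - t with hcdef
  have hc : 0 < c := sub_pos.mpr htb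
  have hcne : c ≠ 0 := hc.ne'
  set F : ℝ → ℝ := fun w => (w - 1) ^ (α - 1) * w ^ (α - 1) with hF
  have key : (∫ s in a..t, F (-(c⁻¹) * s + b / c)) =
      (-(c⁻¹))⁻¹ • ∫ w in -(c⁻¹) * a + b / c..-(c⁻¹) * t + b / c, F w :=
    integral_comp_mul_add F (neg_ne_zero.mpr (inv_ne_zero hcne)) (b / c)
  have he1 : -(c⁻¹) * t + b / c = 1 := by
    field_simp
    rw [hcdef]; ring
  have he2 : -(c⁻¹) * a + b / c = (b - a) / c := by
    field_simp
    ring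
  rw [he1, he2] at key
  have hKpos : 0 < c ^ (α - 1) := Real.rpow_pos_of_pos hc _
  have hcongr : (∫ s in a..t, F (-(c⁻¹) * s + b / c)) =
      ∫ s in a..t, ((b - s) ^ (α - 1) * (t - s) ^ (α - 1)) * (c ^ (α - 1) * c ^ (α - 1))⁻¹ := by
    refine intervalIntegral.integral_congr fun s hs => ?_
    rw [Set.uIcc_of_le hat] at hs
    have hts : 0 ≤ t - s := sub_nonneg.mpr hs.2
    have hbs : 0 ≤ b - s := by linarith [hs.2, htb.le]
    have h1 : -(c⁻¹) * s + b / c = (b - s) / c := by field_simp; ring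
    have h2 : (b - s) / c - 1 = (t - s) / c := by field_simp; ring
    simp only [hF, h1, h2]
    rw [Real.div_rpow hts hc.le, Real.div_rpow hbs hc.le]
    field_simp
  rw [hcongr, intervalIntegral.integral_mul_const] at key
  -- key : I * (c^(α-1) * c^(α-1))⁻¹ = (-(c⁻¹))⁻¹ • J where J = ∫ in (b-a)/c..1
  rw [intervalIntegral.integral_symm 1 ((b - a) / c), smul_eq_mul] at key
  have hJ : (∫ w in (1:ℝ)..((b - a) / c), F w) =
      c⁻¹ * ((∫ s in a..t, ((b - s) ^ (α - 1) * (t - s) ^ (α - 1))) *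
        (c ^ (α - 1) * c ^ (α - 1))⁻¹) := by
    rw [key]
    field_simp
  have hpow : c ^ (2 * α - 1) = c ^ (α - 1) * c ^ (α - 1) * c := by
    rw [← Real.rpow_add hc, ← Real.rpow_add_one hcne]
    congr 1
    ring
  have hΓ : Real.Gamma α ≠ 0 := (Real.Gamma_pos_of_pos hα0).ne'
  rw [RLintegralLeft, hJ, hpow]
  field_simp
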